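/- Friendliness of the binary OR multiple access channel: for any k ≥ 2, p ∈ (0,1), and 1 ≤ s < k, I(X_1,…,X_s ; Y | X_{s+1},…,X_k) = Pr{X_{s+1} = ⋯ = X_k = 0} · I_{μ₀}(X_1,…,X_s ; Y), where I_{μ₀} denotes mutual information computed under the law conditioned on the event {X_{s+1} = ⋯ = X_k = 0}. Consequently, I(X_1,…,X_s ; Y | X_{s+1},…,X_k) ≤ I_{μ₀}(X_1,…,X_s ; Y). -/

import Mathlib

open Finset
open scoped Classical

noncomputable section

/-- The Bernoulli probability mass function on `Bool` with parameter `p`. -/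
def bern (p : ℝ) (b : Bool) : ℝ := if b then p else 1 - p

/-- The binary OR of a finite family of bits. -/
def orB {t : ℕ} (x : Fin t → Bool) : Bool := decide (∃ i, x i = true)

/-- Mutual information (natural logarithm) of a joint pmf on a product of two finite sets. -/
def MI {A B : Type} [Fintype A] [Fintype B] (μ : A → B → ℝ) : ℝ :=
  ∑ a : A, ∑ b : B,
    μ a b * Real.log (μ a b / ((∑ b' : B, μ a b') * (∑ a' : A, μ a' b)))

/-- Conditional mutual information `I(A;B|C)` (natural logarithm) of a joint pmf on a
product of three finite sets, conditioning on the third coordinate. -/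
def CMI {A B C : Type} [Fintype A] [Fintype B] [Fintype C] (μ : A → B → C → ℝ) : ℝ :=
  ∑ a : A, ∑ b : B, ∑ c : C,
    μ a b c * Real.log ((μ a b c * (∑ a' : A, ∑ b' : B, μ a' b' c)) /
      ((∑ b' : B, μ a b' c) * (∑ a' : A, μ a' b c)))

/-- Joint pmf of `((X_1,…,X_s), Y, (X_{s+1},…,X_{s+r}))` for the `(s+r)`-user binary OR
multiple access channel at parameter `p` with channel `W`. -/
def macAYC {Y : Type} [Fintype Y] (W : Y → Bool → ℝ) (p : ℝ) (s r : ℕ)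
    (a : Fin s → Bool) (y : Y) (c : Fin r → Bool) : ℝ :=
  (∏ i, bern p (a i)) * (∏ j, bern p (c j)) * W y (orB a || orB c)

/-- `Pr{X_{s+1} = ⋯ = X_k = 0}` under the above joint law. -/
def probZero {Y : Type} [Fintype Y] (W : Y → Bool → ℝ) (p : ℝ) (s r : ℕ) : ℝ :=
  ∑ a : Fin s → Bool, ∑ y : Y, macAYC W p s r a y (fun _ => false)

/-- The joint pmf of `((X_1,…,X_s), Y)` under the law conditioned on the event
`{X_{s+1} = ⋯ = X_k = 0}`. -/
def condZeroJoint {Y : Type} [Fintype Y] (W : Y → Bool → ℝ) (p : ℝ) (s r : ℕ)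
    (a : Fin s → Bool) (y : Y) : ℝ :=
  macAYC W p s r a y (fun _ => false) / probZero W p s r

/-- Gibbs' inequality in double-sum form. -/
lemma gibbs2 {A B : Type} [Fintype A] [Fintype B] (f g : A → B → ℝ)
    (hf : ∀ a b, 0 ≤ f a b) (hg : ∀ a b, 0 ≤ g a b)
    (hfg : ∀ a b, g a b = 0 → f a b = 0)
    (hsum : ∑ a : A, ∑ b : B, g a b ≤ ∑ a : A, ∑ b : B, f a b) :
    0 ≤ ∑ a : A, ∑ b : B, f a b * Real.log (f a b / g a b) := by
  have key : ∀ a b, f a b - g a b ≤ f a b * Real.log (f a b / g a b) := by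
    intro a b
    rcases eq_or_lt_of_le (hf a b) with h0 | h0
    · rw [← h0]; simp; linarith [hg a b]
    · have hgpos : 0 < g a b := by
        rcases eq_or_lt_of_le (hg a b) with h1 | h1
        · exfalso; have := hfg a b h1.symm; linarith
        · exact h1
      have h1 := Real.one_sub_inv_le_log_of_pos (div_pos h0 hgpos)
      rw [inv_div] at h1
      have h2 := mul_le_mul_of_nonneg_left h1 h0.le
      calc f a b - g a b = f a b * (1 - g a b / f a b) := by field_simp
        _ ≤ f a b * Real.log (f a b / g a b) := h2
  calc (0:ℝ) ≤ ∑ a : A, ∑ b : B, (f a b - g a b) := by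
        simp only [Finset.sum_sub_distrib]; linarith
    _ ≤ _ := Finset.sum_le_sum fun a _ => Finset.sum_le_sum fun b _ => key a b

/-- For a product pmf, the CMI inner term vanishes. -/
lemma inner_zero {A Y : Type} [Fintype A] [Fintype Y] (u : A → ℝ) (v : Y → ℝ)
    (hu : ∀ a, 0 ≤ u a) (hv : ∀ y, 0 ≤ v y) :
    ∑ a : A, ∑ y : Y, u a * v y *
      Real.log ((u a * v y * (∑ a' : A, ∑ y' : Y, u a' * v y')) /
        ((∑ y' : Y, u a * v y') * (∑ a' : A, u a' * v y))) = 0 := by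
  apply Finset.sum_eq_zero; intro a _
  apply Finset.sum_eq_zero; intro y _
  rcases eq_or_lt_of_le (hu a) with ha | ha
  · rw [← ha]; ring
  rcases eq_or_lt_of_le (hv y) with hy | hy
  · rw [← hy]; ring
  have hU : (0:ℝ) < ∑ a' : A, u a' :=
    Finset.sum_pos' (fun a' _ => hu a') ⟨a, Finset.mem_univ a, ha⟩
  have hV : (0:ℝ) < ∑ y' : Y, v y' :=
    Finset.sum_pos' (fun y' _ => hv y') ⟨y, Finset.mem_univ y, hy⟩
  have e1 : ∑ y' : Y, u a * v y' = u a * ∑ y' : Y, v y' := by rw [Finset.mul_sum]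
  have e2 : ∑ a' : A, u a' * v y = (∑ a' : A, u a') * v y := by rw [Finset.sum_mul]
  have e3 : ∑ a' : A, ∑ y' : Y, u a' * v y' = (∑ a' : A, u a') * ∑ y' : Y, v y' := by
    rw [← Finset.sum_mul_sum]
  rw [e1, e2, e3]
  have : (u a * v y * ((∑ a' : A, u a') * ∑ y' : Y, v y')) /
      ((u a * ∑ y' : Y, v y') * ((∑ a' : A, u a') * v y)) = 1 := by
    field_simp
  rw [this, Real.log_one, mul_zero]

theorem statement10 (Y : Type) [Fintype Y] (W : Y → Bool → ℝ)
    (hW0 : ∀ y z, 0 ≤ W y z) (hW1 : ∀ z, ∑ y : Y, W y z = 1)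
    (p : ℝ) (hp : p ∈ Set.Ioo (0 : ℝ) 1)
    (s r : ℕ) (hs : 1 ≤ s) (hr : 1 ≤ r) :
    CMI (macAYC W p s r) = probZero W p s r * MI (condZeroJoint W p s r) ∧
    CMI (macAYC W p s r) ≤ MI (condZeroJoint W p s r) := by
  obtain ⟨hp0, hp1⟩ := hp
  have hb : ∀ b, 0 < bern p b := by
    intro b; cases b <;> simp [bern] <;> linarith
  have hbsum : ∑ b : Bool, bern p b = 1 := by
    simp [bern]
  -- notation
  set Q : (Fin s → Bool) → ℝ := fun a => ∏ i, bern p (a i) with hQdef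
  set Pc : (Fin r → Bool) → ℝ := fun c => ∏ j, bern p (c j) with hPdef
  have hQpos : ∀ a, 0 < Q a := fun a => Finset.prod_pos fun i _ => hb _
  have hPpos : ∀ c, 0 < Pc c := fun c => Finset.prod_pos fun j _ => hb _
  have hQsum : ∑ a : Fin s → Bool, Q a = 1 := by
    rw [hQdef]
    rw [← Fintype.piFinset_univ, ← Finset.prod_univ_sum]
    simp only [hbsum, Finset.prod_const_one]
  -- orB facts
  have horB0 : orB (fun _ : Fin r => false) = false := by simp [orB]
  have horB1 : ∀ c : Fin r → Bool, c ≠ (fun _ => false) → orB c = true := by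
    intro c hc
    by_contra h
    apply hc
    funext j
    simp only [orB, decide_eq_true_eq] at h
    push_neg at h
    simpa using h j
  set c₀ : Fin r → Bool := fun _ => false with hc₀def
  set P0 : ℝ := Pc c₀ with hP0def
  have hP0pos : 0 < P0 := hPpos c₀
  have hP0le : P0 ≤ 1 := by
    rw [hP0def, hPdef]
    apply Finset.prod_le_one (fun j _ => (hb _).le)
    intro j _
    simp [hc₀def, bern]; linarith
  -- probZero = P0
  have hmac0 : ∀ a y, macAYC W p s r a y c₀ = Q a * P0 * W y (orB a) := by
    intro a y
    simp only [macAYC, horB0, Bool.or_false, hP0def, hPdef, hQdef, hc₀def]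
    simp [orB]
  have hPZ : probZero W p s r = P0 := by
    unfold probZero
    calc ∑ a : Fin s → Bool, ∑ y : Y, macAYC W p s r a y c₀
        = ∑ a : Fin s → Bool, Q a * P0 := by
          apply Finset.sum_congr rfl; intro a _
          rw [show ∑ y : Y, macAYC W p s r a y c₀ = ∑ y : Y, Q a * P0 * W y (orB a) from
            Finset.sum_congr rfl fun y _ => hmac0 a y]
          rw [← Finset.mul_sum, hW1, mul_one]
      _ = P0 := by rw [← Finset.sum_mul, hQsum, one_mul]
  -- conditional joint = ν
  set ν : (Fin s → Bool) → Y → ℝ := fun a y => Q a * W y (orB a) with hνdef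
  have hcond : condZeroJoint W p s r = ν := by
    funext a y
    unfold condZeroJoint
    rw [hPZ, hmac0]
    field_simp [hP0pos.ne']
    ring
  have hνnn : ∀ a y, 0 ≤ ν a y := fun a y => mul_nonneg (hQpos a).le (hW0 _ _)
  have hνrow : ∀ a, ∑ y : Y, ν a y = Q a := by
    intro a; rw [hνdef]; simp only
    rw [← Finset.mul_sum, hW1, mul_one]
  have hνsum : ∑ a : Fin s → Bool, ∑ y : Y, ν a y = 1 := by
    rw [show ∑ a : Fin s → Bool, ∑ y : Y, ν a y = ∑ a : Fin s → Bool, Q a from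
      Finset.sum_congr rfl fun a _ => hνrow a, hQsum]
  set col : Y → ℝ := fun y => ∑ a : Fin s → Bool, ν a y with hcoldef
  have hcolnn : ∀ y, 0 ≤ col y := fun y => Finset.sum_nonneg fun a _ => hνnn a y
  have hcolsum : ∑ y : Y, col y = 1 := by
    rw [hcoldef]; simp only
    rw [Finset.sum_comm]; exact hνsum
  -- MI ν ≥ 0
  have hMI : MI ν = ∑ a : Fin s → Bool, ∑ y : Y, ν a y * Real.log (ν a y / (Q a * col y)) := by
    unfold MI
    apply Finset.sum_congr rfl; intro a _
    apply Finset.sum_congr rfl; intro y _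
    rw [hνrow a]
  have hMInn : 0 ≤ MI ν := by
    rw [hMI]
    apply gibbs2 ν (fun a y => Q a * col y) hνnn
      (fun a y => mul_nonneg (hQpos a).le (hcolnn y))
    · intro a y h
      have hcol0 : col y = 0 := by
        rcases mul_eq_zero.mp h with h' | h'
        · exact absurd h' (hQpos a).ne'
        · exact h'
      have := (Finset.sum_eq_zero_iff_of_nonneg (fun a' _ => hνnn a' y)).mp hcol0
      exact this a (Finset.mem_univ a)
    · have : ∑ a : Fin s → Bool, ∑ y : Y, Q a * col y = 1 := by
        calc ∑ a : Fin s → Bool, ∑ y : Y, Q a * col y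
            = ∑ a : Fin s → Bool, Q a * ∑ y : Y, col y := by
              apply Finset.sum_congr rfl; intro a _; rw [Finset.mul_sum]
          _ = ∑ a : Fin s → Bool, Q a := by rw [hcolsum]; simp
          _ = 1 := hQsum
      rw [this, hνsum]
  -- main computation: CMI = P0 * MI ν
  have hCMI : CMI (macAYC W p s r) = P0 * MI ν := by
    unfold CMI
    set F : (Fin s → Bool) → Y → (Fin r → Bool) → ℝ := fun a y c =>
      macAYC W p s r a y c *
        Real.log ((macAYC W p s r a y c *
            (∑ a' : Fin s → Bool, ∑ y' : Y, macAYC W p s r a' y' c)) /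
          ((∑ y' : Y, macAYC W p s r a y' c) *
            (∑ a' : Fin s → Bool, macAYC W p s r a' y c))) with hFdef
    have hswap : ∑ a : Fin s → Bool, ∑ y : Y, ∑ c : Fin r → Bool, F a y c
        = ∑ c : Fin r → Bool, ∑ a : Fin s → Bool, ∑ y : Y, F a y c := by
      rw [show ∑ a : Fin s → Bool, ∑ y : Y, ∑ c : Fin r → Bool, F a y c
          = ∑ a : Fin s → Bool, ∑ c : Fin r → Bool, ∑ y : Y, F a y c from
        Finset.sum_congr rfl fun a _ => Finset.sum_comm]
      exact Finset.sum_comm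
    rw [hswap]
    -- all c ≠ c₀ contribute 0
    have hzero : ∀ c : Fin r → Bool, c ≠ c₀ →
        ∑ a : Fin s → Bool, ∑ y : Y, F a y c = 0 := by
      intro c hc
      have horc : orB c = true := horB1 c hc
      have hmacc : ∀ (a : Fin s → Bool) (y : Y),
          macAYC W p s r a y c = (Q a * Pc c) * W y true := by
        intro a y
        simp only [macAYC, horc, Bool.or_true, hQdef, hPdef]
      simp only [hFdef, hmacc]
      exact inner_zero (fun a => Q a * Pc c) (fun y => W y true)
        (fun a => (mul_pos (hQpos a) (hPpos c)).le) (fun y => hW0 y true)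
    rw [Finset.sum_eq_single c₀ (fun c _ hc => hzero c hc)
      (fun h => absurd (Finset.mem_univ c₀) h)]
    -- the c₀ term
    have hS0 : ∑ a' : Fin s → Bool, ∑ y' : Y, macAYC W p s r a' y' c₀ = P0 := hPZ
    have hM0 : ∀ a, ∑ y' : Y, macAYC W p s r a y' c₀ = Q a * P0 := by
      intro a
      rw [show ∑ y' : Y, macAYC W p s r a y' c₀ = ∑ y' : Y, Q a * P0 * W y' (orB a) from
        Finset.sum_congr rfl fun y _ => hmac0 a y]
      rw [← Finset.mul_sum, hW1, mul_one]
    have hN0 : ∀ y, ∑ a' : Fin s → Bool, macAYC W p s r a' y c₀ = P0 * col y := by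
      intro y
      rw [show ∑ a' : Fin s → Bool, macAYC W p s r a' y c₀
          = ∑ a' : Fin s → Bool, Q a' * P0 * W y (orB a') from
        Finset.sum_congr rfl fun a' _ => hmac0 a' y]
      rw [hcoldef, hνdef]; simp only
      rw [Finset.mul_sum]
      apply Finset.sum_congr rfl; intro a' _; ring
    rw [hMI, Finset.mul_sum]
    apply Finset.sum_congr rfl; intro a _
    rw [Finset.mul_sum]
    apply Finset.sum_congr rfl; intro y _
    rw [hFdef]
    simp only
    rw [hmac0 a y, hS0, hM0 a, hN0 y]
    have harg : (Q a * P0 * W y (orB a) * P0) / (Q a * P0 * (P0 * col y))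
        = Q a * W y (orB a) / (Q a * col y) := by
      rw [show Q a * P0 * W y (orB a) * P0 = (P0 * P0) * (Q a * W y (orB a)) by ring,
        show Q a * P0 * (P0 * col y) = (P0 * P0) * (Q a * col y) by ring]
      exact mul_div_mul_left _ _ (by positivity)
    rw [harg, hνdef]
    simp only
    ring
  constructor
  · rw [hCMI, hPZ, hcond]
  · rw [hCMI, hcond]
    calc P0 * MI ν ≤ 1 * MI ν := mul_le_mul_of_nonneg_right hP0le hMInn
      _ = MI ν := one_mul _
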